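/- A d×d unitary matrix M lies in the set {H + c·i·I : H Hermitian, c ∈ ℝ} if and only if M is unitarily diagonalizable with all eigenvalues in the two-element set {e^{iα}, −e^{−iα}} for some α ∈ [0, 2π). -/

import Mathlib

open Matrix Real

lemma exp_I_mul_eq (α : ℝ) : Complex.exp (Complex.I * α) =
    (Real.cos α : ℂ) + (Real.sin α : ℂ) * Complex.I := by
  rw [mul_comm, Complex.exp_mul_I, Complex.ofReal_cos, Complex.ofReal_sin]

lemma neg_exp_neg_I_mul_eq (α : ℝ) : -Complex.exp (-(Complex.I * α)) =
    -(Real.cos α : ℂ) + (Real.sin α : ℂ) * Complex.I := by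
  have h : -(Complex.I * (α : ℂ)) = Complex.I * ((-α : ℝ) : ℂ) := by push_cast; ring
  rw [h, exp_I_mul_eq]
  push_cast [Real.cos_neg, Real.sin_neg]
  ring

lemma conj_smul_one_aux {d : ℕ} (Q : Matrix (Fin d) (Fin d) ℂ)
    (hQ : Q ∈ Matrix.unitaryGroup (Fin d) ℂ) (s : ℂ) :
    Q * (s • (1 : Matrix (Fin d) (Fin d) ℂ)) * Qᴴ = s • 1 := by
  rw [mul_smul_comm, mul_one, smul_mul_assoc, ← Matrix.star_eq_conjTranspose,
    Matrix.mem_unitaryGroup_iff.mp hQ]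

lemma conj_add_smul_aux {d : ℕ} (Q : Matrix (Fin d) (Fin d) ℂ)
    (hQ : Q ∈ Matrix.unitaryGroup (Fin d) ℂ) (g : Fin d → ℂ) (s : ℂ) :
    Q * Matrix.diagonal g * Qᴴ + s • 1 = Q * Matrix.diagonal (fun j => g j + s) * Qᴴ := by
  have h1 : Matrix.diagonal (fun j => g j + s)
      = Matrix.diagonal g + s • (1 : Matrix (Fin d) (Fin d) ℂ) := by
    rw [Matrix.smul_one_eq_diagonal, Matrix.diagonal_add]
  rw [h1, Matrix.mul_add, Matrix.add_mul, conj_smul_one_aux Q hQ]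

theorem stmt_13 {d : ℕ} (M : Matrix (Fin d) (Fin d) ℂ)
    (hM : M ∈ Matrix.unitaryGroup (Fin d) ℂ) :
    (∃ (H : Matrix (Fin d) (Fin d) ℂ) (c : ℝ), H.IsHermitian ∧
        M = H + ((c : ℂ) * Complex.I) • (1 : Matrix (Fin d) (Fin d) ℂ)) ↔
      ∃ α ∈ Set.Ico (0 : ℝ) (2 * π), ∃ Q ∈ Matrix.unitaryGroup (Fin d) ℂ,
        ∃ f : Fin d → ℂ,
          (∀ i, f i = Complex.exp (Complex.I * α) ∨
            f i = -Complex.exp (-(Complex.I * α))) ∧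
          M = Q * Matrix.diagonal f * Qᴴ := by
  constructor
  · rintro ⟨H, c, hH, rfl⟩
    rcases Nat.eq_zero_or_pos d with hd | hd
    · subst hd
      refine ⟨0, ⟨le_refl _, by positivity⟩, 1, one_mem _, fun j => j.elim0,
        fun i => i.elim0, Subsingleton.elim _ _⟩
    set U : Matrix (Fin d) (Fin d) ℂ := (hH.eigenvectorUnitary : Matrix (Fin d) (Fin d) ℂ) with hUdef
    have hUmem : U ∈ Matrix.unitaryGroup (Fin d) ℂ := (hH.eigenvectorUnitary).2
    set g : Fin d → ℂ := fun j => (hH.eigenvalues j : ℂ) + (c : ℂ) * Complex.I with hgdef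
    have hMdiag : H + ((c : ℂ) * Complex.I) • (1 : Matrix (Fin d) (Fin d) ℂ)
        = U * Matrix.diagonal g * Uᴴ := by
      have hs := hH.spectral_theorem
      rw [Unitary.conjStarAlgAut_apply, Matrix.star_eq_conjTranspose] at hs
      rw [hs, conj_add_smul_aux U hUmem]
      rfl
    rw [hMdiag] at hM
    have hsU : Uᴴ * U = 1 := by
      rw [← Matrix.star_eq_conjTranspose]; exact Matrix.mem_unitaryGroup_iff'.mp hUmem
    have hDmem : Matrix.diagonal g ∈ Matrix.unitaryGroup (Fin d) ℂ := by
      have h1 := mul_mem (mul_mem (Unitary.star_mem hUmem) hM) hUmem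
      have h2 : star U * (U * Matrix.diagonal g * Uᴴ) * U = Matrix.diagonal g := by
        rw [Matrix.star_eq_conjTranspose]
        calc Uᴴ * (U * Matrix.diagonal g * Uᴴ) * U
            = (Uᴴ * U) * Matrix.diagonal g * (Uᴴ * U) := by noncomm_ring
          _ = Matrix.diagonal g := by rw [hsU, one_mul, mul_one]
      rwa [h2] at h1
    have key : ∀ j, (hH.eigenvalues j) ^ 2 + c ^ 2 = 1 := by
      intro j
      have h1 := Matrix.mem_unitaryGroup_iff'.mp hDmem
      have h2 := congrFun (congrFun h1 j) j
      simp only [Matrix.star_eq_conjTranspose, Matrix.diagonal_conjTranspose,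
        Matrix.diagonal_mul_diagonal, Matrix.diagonal_apply_eq, Matrix.one_apply_eq,
        Pi.star_apply, Function.comp_apply] at h2
      have h3 : Complex.normSq (g j) = 1 := by
        have hmc := Complex.mul_conj (g j)
        rw [mul_comm] at hmc
        rw [Complex.star_def] at h2
        rw [h2] at hmc
        exact_mod_cast hmc.symm
      have h4 : Complex.normSq ((hH.eigenvalues j : ℂ) + (c : ℂ) * Complex.I)
          = (hH.eigenvalues j) ^ 2 + c ^ 2 := Complex.normSq_add_mul_I _ _
      rw [hgdef] at h3
      simp only at h3
      linarith [h4.symm.trans h3]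
    have hc1 : -1 ≤ c := by nlinarith [key ⟨0, hd⟩, sq_nonneg (hH.eigenvalues ⟨0, hd⟩)]
    have hc2 : c ≤ 1 := by nlinarith [key ⟨0, hd⟩, sq_nonneg (hH.eigenvalues ⟨0, hd⟩)]
    set β := Real.arcsin c with hβ
    set α := if 0 ≤ β then β else β + 2 * π with hα
    have hsin : Real.sin α = c := by
      rw [hα]; split
      · exact Real.sin_arcsin hc1 hc2
      · rw [Real.sin_add_two_pi]; exact Real.sin_arcsin hc1 hc2
    have hcosβ : Real.cos β = Real.sqrt (1 - c ^ 2) := Real.cos_arcsin c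
    have hcos : Real.cos α = Real.sqrt (1 - c ^ 2) := by
      rw [hα]; split
      · exact hcosβ
      · rw [Real.cos_add_two_pi]; exact hcosβ
    have hcossq : Real.cos α ^ 2 = 1 - c ^ 2 := by
      rw [hcos, Real.sq_sqrt]; nlinarith
    have hβmem := Real.arcsin_mem_Icc c
    have hαmem : α ∈ Set.Ico (0 : ℝ) (2 * π) := by
      rw [hα]
      rcases hβmem with ⟨hβ1, hβ2⟩
      have hπ := Real.pi_pos
      split
      · exact ⟨by linarith, by linarith⟩
      · rename_i hneg
        push_neg at hneg
        exact ⟨by linarith, by linarith⟩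
    refine ⟨α, hαmem, U, hUmem, g, ?_, hMdiag⟩
    intro j
    have hev : hH.eigenvalues j = Real.cos α ∨ hH.eigenvalues j = -Real.cos α := by
      have hsq : (hH.eigenvalues j) ^ 2 = (Real.cos α) ^ 2 := by
        rw [hcossq]; linarith [key j]
      exact sq_eq_sq_iff_eq_or_eq_neg.mp hsq
    rcases hev with h | h
    · left
      rw [exp_I_mul_eq, hgdef]
      simp only [h, hsin]
    · right
      rw [neg_exp_neg_I_mul_eq, hgdef]
      simp only [h, hsin]
      push_cast
      ring
  · rintro ⟨α, hα, Q, hQ, f, hf, rfl⟩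
    refine ⟨Q * Matrix.diagonal (fun j => f j - (Real.sin α : ℂ) * Complex.I) * Qᴴ,
      Real.sin α, ?_, ?_⟩
    · have hreal : ∀ j, star (f j - (Real.sin α : ℂ) * Complex.I)
          = f j - (Real.sin α : ℂ) * Complex.I := by
        intro j
        rcases hf j with h | h
        · have h2 : f j - (Real.sin α : ℂ) * Complex.I = ((Real.cos α : ℝ) : ℂ) := by
            rw [h, exp_I_mul_eq]; ring
          rw [h2, Complex.star_def, Complex.conj_ofReal]
        · have h2 : f j - (Real.sin α : ℂ) * Complex.I = ((-Real.cos α : ℝ) : ℂ) := by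
            rw [h, neg_exp_neg_I_mul_eq]; push_cast; ring
          rw [h2, Complex.star_def, Complex.conj_ofReal]
      show _ = _
      rw [Matrix.conjTranspose_mul, Matrix.conjTranspose_mul,
        Matrix.conjTranspose_conjTranspose, Matrix.diagonal_conjTranspose]
      have hfun : (star fun j => f j - (Real.sin α : ℂ) * Complex.I)
          = fun j => f j - (Real.sin α : ℂ) * Complex.I := by
        funext j; exact hreal j
      rw [hfun, mul_assoc]
    · rw [conj_add_smul_aux Q hQ]
      congr 1
      funext j
      ring
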